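/- The generating function Σ_{n≥0} u_2(n) t^n equals (1 - 2t)/(1 - 5t + 2t^2) as a formal power series, where u_2(n) = Σ_{k≥0} a(n,k)^2. -/

import Mathlib

open Polynomial

noncomputable def F (n : ℕ) : Polynomial ℤ :=
  ∏ i ∈ Finset.range n, (1 + Polynomial.X ^ (2 ^ i) + Polynomial.X ^ (2 ^ (i + 1)))

noncomputable def a (n : ℕ) (k : ℕ) : ℤ := (F n).coeff k

noncomputable def u2 (n : ℕ) : ℤ := ∑ᶠ k : ℕ, (a n k) ^ 2

-- trinomial facts
lemma trin_eq (m : ℕ) :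
    (1 + X ^ (2^m) + X ^ (2^(m+1)) : ℤ[X]) = trinomial 0 (2^m) (2^(m+1)) 1 1 1 := by
  simp [trinomial, add_comm]

lemma h1 (m : ℕ) : (0:ℕ) < 2^m := Nat.pow_pos (by norm_num)

lemma h2 (m : ℕ) : (2:ℕ)^m < 2^(m+1) := Nat.pow_lt_pow_succ (by norm_num)

lemma trin_monic (m : ℕ) : (1 + X ^ (2^m) + X ^ (2^(m+1)) : ℤ[X]).Monic := by
  rw [trin_eq]; exact trinomial_monic (h1 m) (h2 m)

lemma trin_natDegree (m : ℕ) :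
    (1 + X ^ (2^m) + X ^ (2^(m+1)) : ℤ[X]).natDegree = 2^(m+1) := by
  rw [trin_eq]; exact trinomial_natDegree (h1 m) (h2 m) one_ne_zero

lemma trin_mirror (m : ℕ) :
    (1 + X ^ (2^m) + X ^ (2^(m+1)) : ℤ[X]).mirror = 1 + X ^ (2^m) + X ^ (2^(m+1)) := by
  rw [trin_eq, trinomial_mirror (h1 m) (h2 m) one_ne_zero one_ne_zero]
  have e : 2^(m+1) - 2^m + 0 = 2^m := by rw [pow_succ]; omega
  rw [e, ← trin_eq]

lemma F_monic (n : ℕ) : (F n).Monic :=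
  monic_prod_of_monic _ _ fun i _ => trin_monic i

lemma F_natDegree (n : ℕ) : (F n).natDegree = 2^(n+1) - 2 := by
  rw [F, natDegree_prod_of_monic _ _ fun i _ => trin_monic i]
  induction n with
  | zero => simp
  | succ n ih =>
    rw [Finset.sum_range_succ, ih, trin_natDegree]
    have hn : (2:ℕ) ≤ 2^(n+1) := by
      have : (1:ℕ) ≤ 2^n := Nat.one_le_two_pow
      rw [pow_succ]; omega
    rw [pow_succ 2 (n+1)]
    omega

lemma F_mirror (n : ℕ) : (F n).mirror = F n := by
  induction n with
  | zero =>
    show mirror 1 = 1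
    rw [show (1:ℤ[X]) = C 1 by simp, mirror_C]
  | succ n ih =>
    rw [F, Finset.prod_range_succ, ← F, mirror_mul_of_domain, ih, trin_mirror]

lemma F_coeff_zero (n : ℕ) : (F n).coeff 0 = 1 := by
  rw [coeff_zero_eq_eval_zero, F, eval_prod]
  apply Finset.prod_eq_one
  intro i _
  simp [(h1 i).ne', (h1 (i+1)).ne']

-- general symmetry lemma
lemma symm_coeff {p : ℤ[X]} (hm : p.mirror = p) (h0 : p.coeff 0 ≠ 0) {k : ℕ}
    (hk : k ≤ p.natDegree) : p.coeff (p.natDegree - k) = p.coeff k := by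
  have hntd : p.natTrailingDegree = 0 := natTrailingDegree_eq_zero_of_constantCoeff_ne_zero h0
  conv_rhs => rw [← hm]
  rw [coeff_mirror, hntd, add_zero, revAt_le hk]

noncomputable def U (n : ℕ) : ℤ := (F n ^ 2).coeff (2^(n+1) - 2)
noncomputable def W (n : ℕ) : ℤ := (F n ^ 2).coeff (2^(n+1) - 2 + 2^n)

lemma Fsq_mirror (n : ℕ) : (F n ^ 2).mirror = F n ^ 2 := by
  rw [sq, mirror_mul_of_domain, F_mirror, ← sq]

lemma Fsq_coeff_zero (n : ℕ) : (F n ^ 2).coeff 0 = 1 := by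
  rw [coeff_zero_eq_eval_zero, eval_pow, ← coeff_zero_eq_eval_zero, F_coeff_zero]
  norm_num

lemma Fsq_natDegree (n : ℕ) : (F n ^ 2).natDegree = 2 * (2^(n+1) - 2) := by
  rw [natDegree_pow, F_natDegree]

lemma Fsq_symm (n : ℕ) {k : ℕ} (hk : k ≤ 2 * (2^(n+1) - 2)) :
    (F n ^ 2).coeff (2 * (2^(n+1) - 2) - k) = (F n ^ 2).coeff k := by
  have := symm_coeff (Fsq_mirror n) (by rw [Fsq_coeff_zero]; norm_num)
    (k := k) (by rwa [Fsq_natDegree])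
  rwa [Fsq_natDegree] at this

lemma Fsq_zero (n : ℕ) {m : ℕ} (hm : 2 * (2^(n+1) - 2) < m) : (F n ^ 2).coeff m = 0 :=
  coeff_eq_zero_of_natDegree_lt (by rwa [Fsq_natDegree])

lemma u2_eq_U (n : ℕ) : u2 n = U n := by
  have hd := F_natDegree n
  set d := 2^(n+1) - 2 with hdd
  have hsupp : (Function.support fun k => (a n k)^2) ⊆ ↑(Finset.range (d+1)) := by
    intro k hk
    simp only [Function.mem_support] at hk
    have hne : a n k ≠ 0 := fun h => hk (by rw [h]; ring)
    have := le_natDegree_of_ne_zero hne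
    rw [hd] at this
    simp only [Finset.coe_range, Set.mem_Iio]
    omega
  rw [u2, finsum_eq_sum_of_support_subset _ hsupp, U, sq, coeff_mul, ← hdd,
    Finset.Nat.sum_antidiagonal_eq_sum_range_succ_mk]
  apply Finset.sum_congr rfl
  intro k hk
  rw [Finset.mem_range] at hk
  have hk' : k ≤ (F n).natDegree := by omega
  have hs := symm_coeff (F_mirror n) (by rw [F_coeff_zero]; norm_num) hk'
  rw [hd] at hs
  show (a n k)^2 = (F n).coeff k * (F n).coeff (d - k)
  rw [hs, sq]
  rfl

lemma trin_sq (s : ℕ) : ((1 + X^s + X^(2*s) : ℤ[X]))^2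
    = 1 + C 2 * X^s + C 3 * X^(2*s) + C 2 * X^(3*s) + X^(4*s) := by
  have e2 : (X^(2*s) : ℤ[X]) = (X^s)^2 := by rw [← pow_mul, mul_comm]
  have e3 : (X^(3*s) : ℤ[X]) = (X^s)^3 := by rw [← pow_mul, mul_comm]
  have e4 : (X^(4*s) : ℤ[X]) = (X^s)^4 := by rw [← pow_mul, mul_comm]
  rw [e2, e3, e4, map_ofNat, map_ofNat]
  ring

lemma coeff_mul_trin_sq (p : ℤ[X]) (s m : ℕ) :
    (p * (1 + X^s + X^(2*s))^2).coeff m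
    = p.coeff m
      + 2 * (if s ≤ m then p.coeff (m - s) else 0)
      + 3 * (if 2*s ≤ m then p.coeff (m - 2*s) else 0)
      + 2 * (if 3*s ≤ m then p.coeff (m - 3*s) else 0)
      + (if 4*s ≤ m then p.coeff (m - 4*s) else 0) := by
  rw [trin_sq, mul_add, mul_add, mul_add, mul_add, mul_one,
    mul_left_comm p (C 2), mul_left_comm p (C 3), mul_left_comm p (C 2),
    coeff_add, coeff_add, coeff_add, coeff_add,
    coeff_C_mul, coeff_C_mul, coeff_C_mul,
    coeff_mul_X_pow', coeff_mul_X_pow', coeff_mul_X_pow', coeff_mul_X_pow']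

lemma F_succ (n : ℕ) : F (n+1) = F n * (1 + X^(2^n) + X^(2*2^n)) := by
  rw [F, Finset.prod_range_succ, ← F, show 2^(n+1) = 2*2^n from by rw [pow_succ]; ring]

lemma U0 : U 0 = 1 := by simp [U, F]

lemma W0 : W 0 = 0 := by simp [W, F, coeff_one]

lemma W_succ (n : ℕ) : W (n+1) = U n + 2 * W n := by
  have hs : 1 ≤ 2^n := Nat.one_le_two_pow
  rw [W, F_succ, mul_pow,
    show 2^(n+1+1) - 2 + 2^(n+1) = 6*2^n-2 from by rw [pow_succ, pow_succ]; omega,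
    coeff_mul_trin_sq,
    if_pos (by omega), if_pos (by omega), if_pos (by omega), if_pos (by omega),
    show 6*2^n-2-2^n = 5*2^n-2 from by omega,
    show 6*2^n-2-2*2^n = 4*2^n-2 from by omega,
    show 6*2^n-2-3*2^n = 3*2^n-2 from by omega,
    show 6*2^n-2-4*2^n = 2*2^n-2 from by omega,
    Fsq_zero n (by rw [pow_succ]; omega),
    Fsq_zero n (by rw [pow_succ]; omega),
    Fsq_zero n (by rw [pow_succ]; omega)]
  have hU : U n = (F n^2).coeff (2*2^n-2) := by
    rw [U, show (2:ℕ)^(n+1)-2 = 2*2^n-2 from by rw [pow_succ]; omega]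
  have hW : W n = (F n^2).coeff (3*2^n-2) := by
    rw [W, show (2:ℕ)^(n+1)-2+2^n = 3*2^n-2 from by rw [pow_succ]; omega]
  rw [← hU, ← hW]
  ring

lemma U_succ (n : ℕ) : U (n+1) = 3 * U n + 4 * W n := by
  rcases Nat.eq_zero_or_pos n with rfl | hn
  · rw [U0, W0, U, F_succ, mul_pow, show 2^(0+1+1) - 2 = (2:ℕ) from rfl,
      coeff_mul_trin_sq]
    norm_num [F, coeff_one]
  · have hs : 2 ≤ 2^n := by
      calc (2:ℕ) = 2^1 := rfl
      _ ≤ 2^n := Nat.pow_le_pow_right (by norm_num) hn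
    rw [U, F_succ, mul_pow,
      show 2^(n+1+1) - 2 = 4*2^n-2 from by rw [pow_succ, pow_succ]; omega,
      coeff_mul_trin_sq,
      if_pos (by omega), if_pos (by omega), if_pos (by omega), if_neg (by omega),
      show 4*2^n-2-2^n = 3*2^n-2 from by omega,
      show 4*2^n-2-2*2^n = 2*2^n-2 from by omega,
      show 4*2^n-2-3*2^n = 2^n-2 from by omega,
      Fsq_zero n (by rw [pow_succ]; omega)]
    have hsymm := Fsq_symm n (k := 2^n-2) (by rw [pow_succ]; omega)
    rw [show 2*(2^(n+1)-2) - (2^n-2) = 3*2^n-2 from by rw [pow_succ]; omega] at hsymm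
    have hU : U n = (F n^2).coeff (2*2^n-2) := by
      rw [U, show (2:ℕ)^(n+1)-2 = 2*2^n-2 from by rw [pow_succ]; omega]
    have hW : W n = (F n^2).coeff (3*2^n-2) := by
      rw [W, show (2:ℕ)^(n+1)-2+2^n = 3*2^n-2 from by rw [pow_succ]; omega]
    rw [← hsymm, ← hU, ← hW]
    ring

lemma u2_zero : u2 0 = 1 := by rw [u2_eq_U, U0]

lemma u2_one : u2 1 = 3 := by rw [u2_eq_U, U_succ, U0, W0]; ring

lemma u2_rec (n : ℕ) : u2 (n+2) = 5 * u2 (n+1) - 2 * u2 n := by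
  have h1 := U_succ (n+1)
  have h2 := U_succ n
  have h3 := W_succ n
  rw [u2_eq_U, u2_eq_U, u2_eq_U]
  linarith

/-- Σ_{n≥0} u₂(n) tⁿ = (1-2t)/(1-5t+2t²) as formal power series over ℚ,
stated with denominators cleared. -/
theorem u2_generating_function :
    (PowerSeries.mk fun n => (u2 n : ℚ)) *
      (1 - 5 * (PowerSeries.X : PowerSeries ℚ) + 2 * PowerSeries.X ^ 2) =
    1 - 2 * PowerSeries.X := by
  set S := (PowerSeries.mk fun n => (u2 n : ℚ)) with hS
  have hring : S * (1 - 5 * (PowerSeries.X : PowerSeries ℚ) + 2 * PowerSeries.X ^ 2)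
      = S - PowerSeries.C (5:ℚ) * (S * PowerSeries.X ^ 1)
        + PowerSeries.C (2:ℚ) * (S * PowerSeries.X ^ 2) := by
    rw [map_ofNat, map_ofNat]
    ring
  have hrhs : (1 - 2 * PowerSeries.X : PowerSeries ℚ)
      = 1 - PowerSeries.C (2:ℚ) * PowerSeries.X ^ 1 := by
    rw [map_ofNat, pow_one]
  rw [hring, hrhs]
  ext n
  rw [map_add, map_sub, map_sub, PowerSeries.coeff_C_mul, PowerSeries.coeff_C_mul,
    PowerSeries.coeff_mul_X_pow', PowerSeries.coeff_mul_X_pow', hS,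
    PowerSeries.coeff_mk, PowerSeries.coeff_C_mul, PowerSeries.coeff_X_pow]
  rcases n with _ | _ | n
  · norm_num [u2_zero, PowerSeries.coeff_one]
  · norm_num [u2_one, u2_zero, PowerSeries.coeff_one, PowerSeries.coeff_mk]
  · have hrec := u2_rec n
    have h1 : ¬ (n + 1 + 1 = 0) := by omega
    rw [if_pos (by omega : 1 ≤ n+1+1), if_pos (by omega : 2 ≤ n+1+1),
      PowerSeries.coeff_one, if_neg h1, if_neg (show ¬(n+1+1 = 1) from by omega),
      show n+1+1-1 = n+1 from by omega, show n+1+1-2 = n from by omega,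
      PowerSeries.coeff_mk, PowerSeries.coeff_mk]
    push_cast [hrec]
    ring
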